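/- Let p and q be probability measures on a measurable space Ω with q absolutely continuous with respect to p and KL(q‖p) < ∞, and let l : Ω → ℝ be (σ,c)-sub-Gamma under p and q-integrable. Then E_q[l] − E_p[l] ≤ σ √(2 KL(q‖p)) + c · KL(q‖p). -/

import Mathlib

open MeasureTheory Real ENNReal
open scoped Classical

/-- The Kullback–Leibler divergence `KL(q‖p)`, equal to `∫ log (dq/dp) dq` when `q` is
absolutely continuous with respect to `p` (and the integral is well defined),
and `+∞` otherwise. -/
noncomputable def klDiv {Ω : Type*} [MeasurableSpace Ω] (q p : Measure Ω) : ℝ≥0∞ :=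
  if q ≪ p ∧ Integrable (llr q p) q then ENNReal.ofReal (∫ x, llr q p x ∂q) else ⊤

/-- A function `l : Ω → ℝ` is `(σ,c)`-sub-Gamma under a probability measure `p`, with
`σ > 0` and `c > 0`, if it is `p`-integrable and for all `0 < λ < 1/c`,
`log E_p[exp (λ (l − E_p[l]))] ≤ λ²σ²/(2(1 − cλ))` (the moment generating function being
well defined). -/
def IsSubGamma {Ω : Type*} [MeasurableSpace Ω] (p : Measure Ω) (σ c : ℝ) (l : Ω → ℝ) :
    Prop :=
  0 < σ ∧ 0 < c ∧ Integrable l p ∧ ∀ lam : ℝ, 0 < lam → lam < 1 / c →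
    Integrable (fun x => Real.exp (lam * (l x - ∫ y, l y ∂p))) p ∧
    Real.log (∫ x, Real.exp (lam * (l x - ∫ y, l y ∂p)) ∂p) ≤
      lam ^ 2 * σ ^ 2 / (2 * (1 - c * lam))

/-- Auxiliary arithmetic fact for optimizing the parameter `lam`. -/
lemma myKlArith (σ c k : ℝ) (hσ : 0 < σ) (hc : 0 < c) (hk : 0 < k) :
    0 < Real.sqrt (2*k) / (σ + c * Real.sqrt (2*k)) ∧
    Real.sqrt (2*k) / (σ + c * Real.sqrt (2*k)) < 1 / c ∧
    k + (Real.sqrt (2*k) / (σ + c * Real.sqrt (2*k))) ^ 2 * σ ^ 2 /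
      (2 * (1 - c * (Real.sqrt (2*k) / (σ + c * Real.sqrt (2*k))))) =
      (Real.sqrt (2*k) / (σ + c * Real.sqrt (2*k))) * (σ * Real.sqrt (2*k) + c * k) := by
  set s := Real.sqrt (2*k) with hs
  have hspos : 0 < s := Real.sqrt_pos.2 (by linarith)
  have hs2 : s ^ 2 = 2 * k := Real.sq_sqrt (by linarith)
  have hD : 0 < σ + c * s := by positivity
  have hlam : 0 < s / (σ + c * s) := by positivity
  have h1 : 1 - c * (s / (σ + c * s)) = σ / (σ + c * s) := by field_simp; ring
  refine ⟨hlam, ?_, ?_⟩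
  · rw [div_lt_div_iff₀ hD hc]
    nlinarith
  · rw [h1]
    field_simp
    linear_combination (-σ) * hs2

/-- Nonnegativity of the Kullback–Leibler divergence (via Jensen's inequality). -/
lemma myKlNonneg {Ω : Type*} [MeasurableSpace Ω] (q p : Measure Ω)
    [IsProbabilityMeasure q] [IsProbabilityMeasure p] (hac : q ≪ p)
    (hint : Integrable (llr q p) q) : 0 ≤ ∫ x, llr q p x ∂q := by
  have h1 : Integrable (fun x => Real.exp (-llr q p x)) q :=
    Measure.integrable_toReal_rnDeriv.congr (exp_neg_llr hac).symm
  have h2 : ∫ x, Real.exp (-llr q p x) ∂q = ∫ x, (p.rnDeriv q x).toReal ∂q :=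
    integral_congr_ae (exp_neg_llr hac)
  have h3 : ∫ x, (p.rnDeriv q x).toReal ∂q ≤ 1 := by
    have := Measure.setIntegral_toReal_rnDeriv_le (μ := p) (ν := q) (s := Set.univ)
      (measure_ne_top p _)
    simpa using this
  have hJ : Real.exp (∫ x, -llr q p x ∂q) ≤ ∫ x, Real.exp (-llr q p x) ∂q :=
    convexOn_exp.map_integral_le (μ := q) (f := fun x => -llr q p x)
      continuous_exp.continuousOn isClosed_univ
      (Filter.Eventually.of_forall fun _ => Set.mem_univ _) hint.neg h1
  have : Real.exp (∫ x, -llr q p x ∂q) ≤ 1 := hJ.trans (h2 ▸ h3)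
  rw [Real.exp_le_one_iff, integral_neg, neg_nonpos] at this
  exact this

/-- If `q ≪ p` are probability measures with `KL(q‖p) < ∞`, and `l` is `(σ,c)`-sub-Gamma
under `p` and `q`-integrable, then `E_q[l] − E_p[l] ≤ σ √(2 KL(q‖p)) + c · KL(q‖p)`. -/
theorem integral_sub_le_of_subGamma {Ω : Type*} [MeasurableSpace Ω]
    (p q : Measure Ω) [IsProbabilityMeasure p] [IsProbabilityMeasure q]
    (σ c : ℝ) (l : Ω → ℝ) (hac : q ≪ p) (hfin : klDiv q p ≠ ⊤)
    (hsg : IsSubGamma p σ c l) (hlq : Integrable l q) :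
    ∫ x, l x ∂q - ∫ x, l x ∂p ≤
      σ * Real.sqrt (2 * (klDiv q p).toReal) + c * (klDiv q p).toReal := by
  obtain ⟨hσ, hc, hlp, hmgf⟩ := hsg
  have hKL : Integrable (llr q p) q := by
    by_contra h
    exact hfin (by simp [klDiv, h])
  have hnn : 0 ≤ ∫ x, llr q p x ∂q := myKlNonneg q p hac hKL
  have hkval : (klDiv q p).toReal = ∫ x, llr q p x ∂q := by
    rw [klDiv, if_pos ⟨hac, hKL⟩, ENNReal.toReal_ofReal hnn]
  rw [hkval]
  set k := ∫ x, llr q p x ∂q with hkdef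
  set Δ := ∫ x, l x ∂q - ∫ x, l x ∂p with hΔdef
  -- Donsker–Varadhan / change-of-measure step
  have key : ∀ lam : ℝ, 0 < lam → lam < 1 / c →
      lam * Δ ≤ k + lam ^ 2 * σ ^ 2 / (2 * (1 - c * lam)) := by
    intro lam hl0 hl1
    obtain ⟨hfint, hbound⟩ := hmgf lam hl0 hl1
    have hfq : Integrable (fun x => lam * (l x - ∫ y, l y ∂p)) q :=
      (hlq.sub (integrable_const _)).const_mul lam
    have hq' : q ≪ p.tilted (fun x => lam * (l x - ∫ y, l y ∂p)) :=
      hac.trans (absolutelyContinuous_tilted hfint)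
    have hint' : Integrable (llr q (p.tilted (fun x => lam * (l x - ∫ y, l y ∂p)))) q :=
      integrable_llr_tilted_right hac hfq hKL hfint
    have heq := integral_llr_tilted_right (μ := q) (ν := p)
      (f := fun x => lam * (l x - ∫ y, l y ∂p)) hac hfq hfint hKL
    haveI : IsProbabilityMeasure (p.tilted (fun x => lam * (l x - ∫ y, l y ∂p))) :=
      isProbabilityMeasure_tilted hfint
    have h0' : 0 ≤ ∫ x, llr q (p.tilted (fun x => lam * (l x - ∫ y, l y ∂p))) x ∂q :=
      myKlNonneg q _ hq' hint'
    beta_reduce at heq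
    have hintf : ∫ x, lam * (l x - ∫ y, l y ∂p) ∂q = lam * Δ := by
      rw [integral_const_mul, integral_sub hlq (integrable_const _), integral_const]
      simp [hΔdef]
    rw [heq, hintf, ← hkdef] at h0'
    have hcomb := add_le_add_left hbound (k - lam * Δ)
    linarith [h0', hcomb]
  rcases eq_or_lt_of_le hnn with hk0 | hkpos
  · -- KL = 0
    have hk0' : k = 0 := hk0.symm
    rw [hk0']
    simp only [mul_zero, Real.sqrt_zero, add_zero]
    refine le_of_forall_pos_le_add fun ε hε => ?_
    set lam := min (min (ε / σ ^ 2) (1 / (2 * c))) 1 with hlam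
    have hlam0 : 0 < lam := by
      refine lt_min (lt_min (by positivity) (by positivity)) one_pos
    have hlam1 : lam < 1 / c := by
      calc lam ≤ 1 / (2 * c) := (min_le_left _ _).trans (min_le_right _ _)
      _ < 1 / c := by
        rw [div_lt_div_iff₀ (by positivity) hc]
        linarith
    have hclam : c * lam ≤ 1 / 2 := by
      have : lam ≤ 1 / (2 * c) := (min_le_left _ _).trans (min_le_right _ _)
      calc c * lam ≤ c * (1 / (2 * c)) := by nlinarith
      _ = 1 / 2 := by field_simp
    have h1 : (1 : ℝ) ≤ 2 * (1 - c * lam) := by linarith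
    have hb := key lam hlam0 hlam1
    rw [hk0', zero_add] at hb
    have h2 : lam ^ 2 * σ ^ 2 / (2 * (1 - c * lam)) ≤ lam ^ 2 * σ ^ 2 := by
      apply div_le_self (by positivity) h1
    have h3 : lam ^ 2 * σ ^ 2 ≤ lam * ε := by
      have ha : lam ≤ ε / σ ^ 2 := (min_le_left _ _).trans (min_le_left _ _)
      have : lam * σ ^ 2 ≤ ε := by
        rw [← le_div_iff₀ (by positivity)]
        exact ha
      calc lam ^ 2 * σ ^ 2 = lam * (lam * σ ^ 2) := by ring
      _ ≤ lam * ε := by nlinarith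
    have : lam * Δ ≤ lam * ε := le_trans hb (h2.trans h3)
    have := le_of_mul_le_mul_left this hlam0
    linarith
  · -- KL > 0
    obtain ⟨hlam0, hlam1, harith⟩ := myKlArith σ c k hσ hc hkpos
    have hb := key _ hlam0 hlam1
    rw [harith] at hb
    exact le_of_mul_le_mul_left hb hlam0
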